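/- Let p = [b_1^{a_1} ⋯ b_r^{a_r}] (b_1 ≥ ⋯ ≥ b_r) be a symplectic partition of 2n with b_1 even, a_1 = 1, and b_i odd for all 2 ≤ i ≤ r. Then with P := [p_1 p_1 (2n*+1)] one has the exact identity P^t = p^+; in particular (P^t)_{SO_{2n+1}} = (p^+)_{SO_{2n+1}}. -/

import Mathlib

namespace JiangWF

/-- `sCount p i` : the number of parts of `p` that are `≥ i`. -/
def sCount (p : Multiset ℕ) (i : ℕ) : ℕ := (p.filter (fun a => i ≤ a)).card

/-- `rCount p i` : the number of parts of `p` equal to `i`. -/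
def rCount (p : Multiset ℕ) (i : ℕ) : ℕ := p.count i

/-- The largest part of `p` (`0` for the empty partition). -/
def maxPart (p : Multiset ℕ) : ℕ := p.sup

/-- The smallest part of `p` (`0` for the empty partition). -/
noncomputable def minPart (p : Multiset ℕ) : ℕ := sInf {a : ℕ | a ∈ p}

/-- The transpose partition: its `i`-th part is `sCount p i`, for `1 ≤ i ≤ maxPart p`. -/
def transpose (p : Multiset ℕ) : Multiset ℕ :=
  (Multiset.range (maxPart p)).map fun i => sCount p (i + 1)

/-- The sum of the `m` largest parts of `p`. -/
def topSum (p : Multiset ℕ) (m : ℕ) : ℕ :=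
  ∑ i ∈ Finset.Icc 1 p.sum, min m (sCount p i)

/-- Dominance order: `domLE p q` means `p ≤ q`. -/
def domLE (p q : Multiset ℕ) : Prop := ∀ m, topSum p m ≤ topSum q m

/-- `p` is a partition of `N`: all parts positive, summing to `N`. -/
def IsPartitionOf (p : Multiset ℕ) (N : ℕ) : Prop := (∀ a ∈ p, 0 < a) ∧ p.sum = N

/-- Symplectic partition: every odd part occurs with even multiplicity. -/
def IsSymplectic (p : Multiset ℕ) : Prop := ∀ a, a % 2 = 1 → Even (p.count a)

/-- Orthogonal partition: every even part occurs with even multiplicity. -/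
def IsOrthogonal (p : Multiset ℕ) : Prop := ∀ a, a % 2 = 0 → Even (p.count a)

/-- `p^-`: decrease the smallest part by one (deleting it if it becomes `0`). -/
noncomputable def pMinus (p : Multiset ℕ) : Multiset ℕ :=
  if minPart p ≤ 1 then p.erase (minPart p)
  else (minPart p - 1) ::ₘ p.erase (minPart p)

/-- `p^+`: increase the largest part by one. -/
def pPlus (p : Multiset ℕ) : Multiset ℕ := (maxPart p + 1) ::ₘ p.erase (maxPart p)

/-- `p^{+-}`: increase the largest part by one and decrease the smallest by one. -/
noncomputable def pPM (p : Multiset ℕ) : Multiset ℕ := pMinus (pPlus p)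

/-- `p₁ = [⌊b_1/2⌋^{a_1} ⋯ ⌊b_r/2⌋^{a_r}]^t` (discarding zero entries before transposing). -/
def pOne (p : Multiset ℕ) : Multiset ℕ :=
  transpose ((p.map fun b => b / 2).filter fun x => 0 < x)

/-- `Σ_{i : b_i odd} a_i`: the number of odd parts of `p`. -/
def oddMult (p : Multiset ℕ) : ℕ := (p.filter fun a => a % 2 = 1).card

/-- `n* = ⌊(Σ_{i : b_i odd} a_i)/2⌋`. -/
def nStar (p : Multiset ℕ) : ℕ := oddMult p / 2

/-- Append an extra part `m` to `q`, omitted if `m = 0`. -/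
def addPart (m : ℕ) (q : Multiset ℕ) : Multiset ℕ := if m = 0 then q else m ::ₘ q

/-- `c` is the `Sp`-collapse of `p`: the maximal symplectic partition `≤ p` in dominance. -/
def IsSpCollapse (p c : Multiset ℕ) : Prop :=
  IsPartitionOf c p.sum ∧ IsSymplectic c ∧ domLE c p ∧
    ∀ c', IsPartitionOf c' p.sum → IsSymplectic c' → domLE c' p → domLE c' c

/-- `c` is the `SO`-collapse of `p`: the maximal orthogonal partition `≤ p` in dominance. -/
def IsSOCollapse (p c : Multiset ℕ) : Prop :=
  IsPartitionOf c p.sum ∧ IsOrthogonal c ∧ domLE c p ∧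
    ∀ c', IsPartitionOf c' p.sum → IsOrthogonal c' → domLE c' p → domLE c' c

/-- `e` is the `Sp`-expansion of `p`: the minimal special symplectic partition `≥ p`. -/
def IsSpExpansion (p e : Multiset ℕ) : Prop :=
  IsPartitionOf e p.sum ∧ IsSymplectic e ∧ IsSymplectic (transpose e) ∧ domLE p e ∧
    ∀ e', IsPartitionOf e' p.sum → IsSymplectic e' → IsSymplectic (transpose e') →
      domLE p e' → domLE e e'

/-- `e` is the `SO_{2n+1}`-expansion of `p`: the minimal special orthogonal partition `≥ p`
(odd case: special means the transpose is orthogonal). -/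
def IsSOOddExpansion (p e : Multiset ℕ) : Prop :=
  IsPartitionOf e p.sum ∧ IsOrthogonal e ∧ IsOrthogonal (transpose e) ∧ domLE p e ∧
    ∀ e', IsPartitionOf e' p.sum → IsOrthogonal e' → IsOrthogonal (transpose e') →
      domLE p e' → domLE e e'

/-- `e` is the `SO_{2n}`-expansion of `p`: the minimal special orthogonal partition `≥ p`
(even case: special means the transpose is symplectic). -/
def IsSOEvenExpansion (p e : Multiset ℕ) : Prop :=
  IsPartitionOf e p.sum ∧ IsOrthogonal e ∧ IsSymplectic (transpose e) ∧ domLE p e ∧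
    ∀ e', IsPartitionOf e' p.sum → IsOrthogonal e' → IsSymplectic (transpose e') →
      domLE p e' → domLE e e'

/-- `dim_C(q)` for a symplectic partition `q` of `2k`:
`2k² + k − (1/2)Σ s_i(q)² − (1/2)Σ_{i odd} r_i(q)` (note `2k² + k = (|q|² + |q|)/2`). -/
def dimC (p : Multiset ℕ) : ℚ :=
  ((p.sum : ℚ) ^ 2 + (p.sum : ℚ)) / 2
    - (∑ i ∈ Finset.Icc 1 p.sum, (sCount p i : ℚ) ^ 2) / 2
    - (∑ i ∈ Finset.Icc 1 p.sum, if i % 2 = 1 then (rCount p i : ℚ) else 0) / 2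

/-- `dim_B(q)` for an orthogonal partition `q` of `2k+1`:
`2k² + k − (1/2)Σ s_i(q)² + (1/2)Σ_{i odd} r_i(q)` (note `2k² + k = (|q|² − |q|)/2`). -/
def dimB (p : Multiset ℕ) : ℚ :=
  ((p.sum : ℚ) ^ 2 - (p.sum : ℚ)) / 2
    - (∑ i ∈ Finset.Icc 1 p.sum, (sCount p i : ℚ) ^ 2) / 2
    + (∑ i ∈ Finset.Icc 1 p.sum, if i % 2 = 1 then (rCount p i : ℚ) else 0) / 2

/-- `dim_D(q)` for an orthogonal partition `q` of `2k`:
`2k² − k − (1/2)Σ s_i(q)² + (1/2)Σ_{i odd} r_i(q)` (note `2k² − k = (|q|² − |q|)/2`). -/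
def dimD (p : Multiset ℕ) : ℚ :=
  ((p.sum : ℚ) ^ 2 - (p.sum : ℚ)) / 2
    - (∑ i ∈ Finset.Icc 1 p.sum, (sCount p i : ℚ) ^ 2) / 2
    + (∑ i ∈ Finset.Icc 1 p.sum, if i % 2 = 1 then (rCount p i : ℚ) else 0) / 2



/-! ### Auxiliary lemmas -/

lemma sCount_le_card (p : Multiset ℕ) (i : ℕ) : sCount p i ≤ Multiset.card p :=
  Multiset.card_le_card (Multiset.filter_le _ p)

lemma sCount_cons (a : ℕ) (p : Multiset ℕ) (i : ℕ) :
    sCount (a ::ₘ p) i = (if i ≤ a then 1 else 0) + sCount p i := by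
  unfold sCount
  rw [Multiset.filter_cons, Multiset.card_add]
  split_ifs <;> simp

lemma sCount_add (p q : Multiset ℕ) (i : ℕ) :
    sCount (p + q) i = sCount p i + sCount q i := by
  unfold sCount; rw [Multiset.filter_add, Multiset.card_add]

lemma sCount_antitone (p : Multiset ℕ) {i j : ℕ} (h : i ≤ j) : sCount p j ≤ sCount p i := by
  induction p using Multiset.induction_on with
  | empty => simp [sCount]
  | cons a s ih =>
    rw [sCount_cons, sCount_cons]
    split_ifs <;> omega

lemma count_add_sCount (p : Multiset ℕ) (v : ℕ) :
    p.count v + sCount p (v+1) = sCount p v := by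
  induction p using Multiset.induction_on with
  | empty => simp [sCount]
  | cons a s ih =>
    rw [sCount_cons, sCount_cons, Multiset.count_cons]
    split_ifs <;> omega

lemma ext_of_sCount {p q : Multiset ℕ} (hp : ∀ a ∈ p, 0 < a) (hq : ∀ a ∈ q, 0 < a)
    (h : ∀ i, 1 ≤ i → sCount p i = sCount q i) : p = q := by
  ext v
  rcases Nat.eq_zero_or_pos v with rfl | hv
  · rw [Multiset.count_eq_zero_of_notMem (fun hm => absurd (hp 0 hm) (lt_irrefl 0)),
      Multiset.count_eq_zero_of_notMem (fun hm => absurd (hq 0 hm) (lt_irrefl 0))]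
  · have h1 := count_add_sCount p v
    have h2 := count_add_sCount q v
    have e1 := h v hv
    have e2 := h (v+1) (by omega)
    omega

lemma sup_mem_of_ne_zero : ∀ {p : Multiset ℕ}, p ≠ 0 → p.sup ∈ p := by
  intro p
  induction p using Multiset.induction_on with
  | empty => intro h; exact absurd rfl h
  | cons a s ih =>
    intro _
    rcases eq_or_ne s 0 with rfl | hs
    · simp
    · rw [Multiset.sup_cons]
      rcases le_total a s.sup with h1 | h1
      · rw [sup_eq_right.2 h1]; exact Multiset.mem_cons_of_mem (ih hs)
      · rw [sup_eq_left.2 h1]; exact Multiset.mem_cons_self a s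

lemma sCount_eq_zero {p : Multiset ℕ} {i : ℕ} (h : maxPart p < i) : sCount p i = 0 := by
  unfold sCount
  rw [Multiset.card_eq_zero, Multiset.filter_eq_nil]
  intro a ha hle
  have := Multiset.le_sup ha
  unfold maxPart at h
  omega

lemma card_le_sum : ∀ {p : Multiset ℕ}, (∀ a ∈ p, 0 < a) → Multiset.card p ≤ p.sum := by
  intro p
  induction p using Multiset.induction_on with
  | empty => intro _; simp
  | cons a s ih =>
    intro hpos
    simp only [Multiset.card_cons, Multiset.sum_cons]
    have h1 : 0 < a := hpos a (Multiset.mem_cons_self a s)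
    have h2 : Multiset.card s ≤ s.sum := ih (fun b hb => hpos b (Multiset.mem_cons_of_mem hb))
    omega

lemma sup_le_sum (p : Multiset ℕ) : p.sup ≤ p.sum :=
  Multiset.sup_le.2 fun a ha => Multiset.single_le_sum (fun _ _ => Nat.zero_le _) a ha

lemma sCount_one {p : Multiset ℕ} (hpos : ∀ a ∈ p, 0 < a) : sCount p 1 = Multiset.card p := by
  unfold sCount
  have h1 : ∀ a ∈ p, 1 ≤ a := fun a ha => by have := hpos a ha; omega
  rw [Multiset.filter_eq_self.2 h1]

lemma card_filter_range_eq (C : ℕ → Prop) [DecidablePred C] (N c : ℕ) (hcN : c ≤ N)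
    (h1 : ∀ i, i < c → C i) (h2 : ∀ i, c ≤ i → i < N → ¬ C i) :
    Multiset.card ((Multiset.range N).filter C) = c := by
  have key : (Finset.range N).filter C = Finset.range c := by
    ext i
    simp only [Finset.mem_filter, Finset.mem_range]
    constructor
    · rintro ⟨hiN, hC⟩
      by_contra hc
      exact h2 i (by omega) hiN hC
    · intro hic
      exact ⟨by omega, h1 i hic⟩
  have hval : ((Multiset.range N).filter C) = ((Finset.range N).filter C).val := rfl
  rw [hval, key]
  exact Finset.card_range c

lemma card_filter_range_le (C : ℕ → Prop) [DecidablePred C] (N c : ℕ)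
    (h2 : ∀ i, c ≤ i → i < N → ¬ C i) :
    Multiset.card ((Multiset.range N).filter C) ≤ c := by
  have key : (Finset.range N).filter C ⊆ Finset.range c := by
    intro i hi
    simp only [Finset.mem_filter, Finset.mem_range] at hi ⊢
    by_contra hc
    exact h2 i (by omega) hi.1 hi.2
  have hval : ((Multiset.range N).filter C) = ((Finset.range N).filter C).val := rfl
  rw [hval]
  calc ((Finset.range N).filter C).card ≤ (Finset.range c).card := Finset.card_le_card key
  _ = c := Finset.card_range c

lemma le_card_filter_range (C : ℕ → Prop) [DecidablePred C] (N c : ℕ) (hcN : c ≤ N)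
    (h1 : ∀ i, i < c → C i) :
    c ≤ Multiset.card ((Multiset.range N).filter C) := by
  have key : Finset.range c ⊆ (Finset.range N).filter C := by
    intro i hi
    simp only [Finset.mem_filter, Finset.mem_range] at hi ⊢
    exact ⟨by omega, h1 i hi⟩
  have hval : ((Multiset.range N).filter C) = ((Finset.range N).filter C).val := rfl
  rw [hval]
  calc c = (Finset.range c).card := (Finset.card_range c).symm
  _ ≤ ((Finset.range N).filter C).card := Finset.card_le_card key

lemma sCount_transpose (p : Multiset ℕ) (j : ℕ) :
    sCount (transpose p) j
      = Multiset.card ((Multiset.range (maxPart p)).filter (fun i => j ≤ sCount p (i+1))) := by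
  unfold transpose sCount
  rw [← Multiset.countP_eq_card_filter, Multiset.countP_map]

/-! ### Dominance-order antisymmetry machinery -/

/-- `Fc p m` : the number of `i ∈ [1, |p|]` with `sCount p i ≥ m`. -/
def Fc (p : Multiset ℕ) (m : ℕ) : ℕ :=
  ((Finset.Icc 1 p.sum).filter fun i => m ≤ sCount p i).card

lemma topSum_eq_F (p : Multiset ℕ) (hpos : ∀ a ∈ p, 0 < a) (m : ℕ) :
    topSum p m = ∑ x ∈ Finset.Icc 1 p.sum, (if x ≤ m then Fc p x else 0) := by
  have hsc : ∀ i, sCount p i ≤ p.sum := fun i => (sCount_le_card p i).trans (card_le_sum hpos)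
  unfold topSum
  calc ∑ i ∈ Finset.Icc 1 p.sum, min m (sCount p i)
      = ∑ i ∈ Finset.Icc 1 p.sum, ∑ x ∈ Finset.Icc 1 p.sum,
          (if x ≤ sCount p i ∧ x ≤ m then 1 else 0) := by
        refine Finset.sum_congr rfl fun i _ => ?_
        rw [← Finset.card_filter]
        have hset : (Finset.Icc 1 p.sum).filter (fun x => x ≤ sCount p i ∧ x ≤ m)
            = Finset.Icc 1 (min m (sCount p i)) := by
          ext x
          simp only [Finset.mem_filter, Finset.mem_Icc]
          have := hsc i
          omega
        rw [hset, Nat.card_Icc]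
        omega
    _ = ∑ x ∈ Finset.Icc 1 p.sum, ∑ i ∈ Finset.Icc 1 p.sum,
          (if x ≤ sCount p i ∧ x ≤ m then 1 else 0) := Finset.sum_comm
    _ = ∑ x ∈ Finset.Icc 1 p.sum, (if x ≤ m then Fc p x else 0) := by
        refine Finset.sum_congr rfl fun x _ => ?_
        by_cases hxm : x ≤ m
        · rw [if_pos hxm]
          unfold Fc
          rw [Finset.card_filter]
          refine Finset.sum_congr rfl fun i _ => ?_
          simp [hxm]
        · rw [if_neg hxm]
          refine Finset.sum_eq_zero fun i _ => ?_
          simp [hxm]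

lemma F_eq_of_topSum (c₁ c₂ : Multiset ℕ) (h1 : ∀ a ∈ c₁, 0 < a) (h2 : ∀ a ∈ c₂, 0 < a)
    (hsum : c₁.sum = c₂.sum) (htop : ∀ m, topSum c₁ m = topSum c₂ m) :
    ∀ m, 1 ≤ m → m ≤ c₁.sum → Fc c₁ m = Fc c₂ m := by
  have key : ∀ m, ∑ x ∈ Finset.Icc 1 c₁.sum, (if x ≤ m then Fc c₁ x else 0)
      = ∑ x ∈ Finset.Icc 1 c₁.sum, (if x ≤ m then Fc c₂ x else 0) := by
    intro m
    have e1 := topSum_eq_F c₁ h1 m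
    have e2 := topSum_eq_F c₂ h2 m
    rw [← hsum] at e2
    rw [← e1, ← e2, htop m]
  have step : ∀ (F : ℕ → ℕ) (m : ℕ), 1 ≤ m →
      ∑ x ∈ Finset.Icc 1 c₁.sum, (if x ≤ m then F x else 0)
        = (∑ x ∈ Finset.Icc 1 c₁.sum, (if x ≤ m - 1 then F x else 0))
          + (if m ∈ Finset.Icc 1 c₁.sum then F m else 0) := by
    intro F m hm
    rw [← Finset.sum_ite_eq' (Finset.Icc 1 c₁.sum) m F, ← Finset.sum_add_distrib]
    refine Finset.sum_congr rfl fun x hx => ?_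
    by_cases hxm : x = m
    · subst hxm
      rw [if_pos (le_refl x), if_neg (by omega), if_pos rfl]
      omega
    · rw [if_neg hxm]
      by_cases hx1 : x ≤ m - 1
      · rw [if_pos hx1, if_pos (by omega)]
        omega
      · rw [if_neg hx1, if_neg (by omega)]
        omega
  intro m hm1 hmN
  have k1 := key m
  have k2 := key (m-1)
  have s1 := step (Fc c₁) m hm1
  have s2 := step (Fc c₂) m hm1
  have hmem : m ∈ Finset.Icc 1 c₁.sum := Finset.mem_Icc.2 ⟨hm1, hmN⟩
  rw [if_pos hmem] at s1 s2
  omega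

lemma le_F_iff (p : Multiset ℕ) (i m : ℕ) (hi1 : 1 ≤ i) (hiN : i ≤ p.sum) (hm : 1 ≤ m) :
    m ≤ sCount p i ↔ i ≤ Fc p m := by
  constructor
  · intro h
    have hsub : Finset.Icc 1 i ⊆ (Finset.Icc 1 p.sum).filter fun k => m ≤ sCount p k := by
      intro k hk
      simp only [Finset.mem_Icc] at hk
      simp only [Finset.mem_filter, Finset.mem_Icc]
      exact ⟨⟨hk.1, hk.2.trans hiN⟩, h.trans (sCount_antitone p hk.2)⟩
    have hc := Finset.card_le_card hsub
    rw [Nat.card_Icc] at hc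
    unfold Fc
    omega
  · intro h
    by_contra hcon
    push_neg at hcon
    have hsub : ((Finset.Icc 1 p.sum).filter fun k => m ≤ sCount p k) ⊆ Finset.Icc 1 (i-1) := by
      intro k hk
      simp only [Finset.mem_filter, Finset.mem_Icc] at hk
      simp only [Finset.mem_Icc]
      refine ⟨hk.1.1, ?_⟩
      by_contra hki
      push_neg at hki
      have := sCount_antitone p (show i ≤ k by omega)
      omega
    have hc := Finset.card_le_card hsub
    rw [Nat.card_Icc] at hc
    unfold Fc at h
    omega

lemma sCount_eq_F_card (p : Multiset ℕ) (hpos : ∀ a ∈ p, 0 < a) (i : ℕ)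
    (hi1 : 1 ≤ i) (hiN : i ≤ p.sum) :
    sCount p i = ((Finset.Icc 1 p.sum).filter fun m => i ≤ Fc p m).card := by
  have hsc : sCount p i ≤ p.sum := (sCount_le_card p i).trans (card_le_sum hpos)
  have hset : ((Finset.Icc 1 p.sum).filter fun m => i ≤ Fc p m)
      = Finset.Icc 1 (sCount p i) := by
    ext m
    simp only [Finset.mem_filter, Finset.mem_Icc]
    constructor
    · rintro ⟨⟨hm1, hmN⟩, hF⟩
      exact ⟨hm1, (le_F_iff p i m hi1 hiN hm1).2 hF⟩
    · rintro ⟨hm1, hms⟩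
      exact ⟨⟨hm1, hms.trans hsc⟩, (le_F_iff p i m hi1 hiN hm1).1 hms⟩
  rw [hset, Nat.card_Icc]
  omega

lemma domLE_antisymm {c₁ c₂ : Multiset ℕ} (h1 : ∀ a ∈ c₁, 0 < a) (h2 : ∀ a ∈ c₂, 0 < a)
    (hsum : c₁.sum = c₂.sum) (hle : domLE c₁ c₂) (hge : domLE c₂ c₁) : c₁ = c₂ := by
  have htop : ∀ m, topSum c₁ m = topSum c₂ m := fun m => le_antisymm (hle m) (hge m)
  have hF := F_eq_of_topSum c₁ c₂ h1 h2 hsum htop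
  refine ext_of_sCount h1 h2 fun i hi => ?_
  by_cases hiN : i ≤ c₁.sum
  · rw [sCount_eq_F_card c₁ h1 i hi hiN, sCount_eq_F_card c₂ h2 i hi (hsum ▸ hiN)]
    rw [← hsum]
    congr 1
    refine Finset.filter_congr fun m hm => ?_
    simp only [Finset.mem_Icc] at hm
    rw [hF m hm.1 hm.2]
  · have e1 : sCount c₁ i = 0 := sCount_eq_zero (lt_of_le_of_lt (sup_le_sum c₁) (by omega))
    have e2 : sCount c₂ i = 0 := sCount_eq_zero (lt_of_le_of_lt (sup_le_sum c₂) (by omega))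
    rw [e1, e2]

lemma collapse_unique (X c₁ c₂ : Multiset ℕ)
    (h₁ : IsSOCollapse X c₁) (h₂ : IsSOCollapse X c₂) : c₁ = c₂ := by
  obtain ⟨hp1, ho1, hd1, hmax1⟩ := h₁
  obtain ⟨hp2, ho2, hd2, hmax2⟩ := h₂
  exact domLE_antisymm hp1.1 hp2.1 (hp1.2.trans hp2.2.symm)
    (hmax2 c₁ hp1 ho1 hd1) (hmax1 c₂ hp2 ho2 hd2)

/-! ### The main transpose computation -/

lemma part1 (p : Multiset ℕ) (hne : p ≠ 0) (hpos : ∀ a ∈ p, 0 < a)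
    (hsymp : IsSymplectic p) (hb1 : maxPart p % 2 = 0) (ha1 : p.count (maxPart p) = 1)
    (hodd : ∀ a ∈ p, a ≠ maxPart p → a % 2 = 1) :
    transpose ((2 * nStar p + 1) ::ₘ (pOne p + pOne p)) = pPlus p := by
  have hbmem : maxPart p ∈ p := sup_mem_of_ne_zero hne
  set b := maxPart p with hbdef
  set q := p.erase b with hqdef
  have hpbq : p = b ::ₘ q := (Multiset.cons_erase hbmem).symm
  have hbpos : 0 < b := hpos b hbmem
  obtain ⟨m, hm⟩ : ∃ m, b = 2 * m := ⟨b / 2, by omega⟩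
  have hmpos : 0 < m := by omega
  have hqmem : ∀ a ∈ q, a ∈ p := fun a ha => Multiset.mem_of_mem_erase ha
  have hcountq : q.count b = 0 := by
    rw [hqdef, Multiset.count_erase_self, ha1]
  have hqne : ∀ a ∈ q, a ≠ b := by
    intro a ha heq
    rw [heq] at ha
    rw [← Multiset.count_pos] at ha
    omega
  have hqodd : ∀ a ∈ q, a % 2 = 1 := fun a ha => hodd a (hqmem a ha) (hqne a ha)
  have hqlt : ∀ a ∈ q, a < b :=
    fun a ha => lt_of_le_of_ne (Multiset.le_sup (hqmem a ha)) (hqne a ha)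
  have hs0 : ∀ i, b ≤ i → sCount q i = 0 := by
    intro i hi
    unfold sCount
    rw [Multiset.card_eq_zero, Multiset.filter_eq_nil]
    intro a ha hle
    have := hqlt a ha
    omega
  have hs_oddstep : ∀ k, 1 ≤ k → sCount q (2*k) = sCount q (2*k+1) := by
    intro k hk
    unfold sCount
    congr 1
    refine Multiset.filter_congr fun a ha => ?_
    have h2 := hqodd a ha
    omega
  have hfilterq : p.filter (fun a => a % 2 = 1) = q := by
    rw [hpbq, Multiset.filter_cons, if_neg (by omega),
      Multiset.filter_eq_self.2 hqodd, zero_add]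
  have hoddMult : oddMult p = Multiset.card q := by
    unfold oddMult
    rw [hfilterq]
  have hcard_even : Even (Multiset.card q) := by
    rw [← Multiset.toFinset_sum_count_eq]
    refine Finset.even_sum _ fun a ha => ?_
    rw [Multiset.mem_toFinset] at ha
    have haodd := hqodd a ha
    have hane : a ≠ b := hqne a ha
    have hce : q.count a = p.count a := by
      rw [hqdef]
      exact Multiset.count_erase_of_ne hane p
    rw [hce]
    exact hsymp a haodd
  obtain ⟨K, hK⟩ : ∃ K, Multiset.card q = 2 * K := by
    obtain ⟨k, hk⟩ := hcard_even
    exact ⟨k, by omega⟩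
  have hnStar : nStar p = K := by
    unfold nStar
    rw [hoddMult, hK]
    omega
  rw [hnStar]
  have hsK : ∀ i, sCount q i ≤ 2 * K := fun i => hK ▸ sCount_le_card q i
  have hs1 : sCount q 1 = 2 * K := by
    rw [sCount_one (fun a ha => hpos a (hqmem a ha)), hK]
  set hlf : Multiset ℕ := (q.map (fun x => x / 2)).filter (fun x => 0 < x) with hhdef
  have hq''eq : ((p.map fun x => x / 2).filter fun x => 0 < x) = m ::ₘ hlf := by
    rw [hpbq, Multiset.map_cons, Multiset.filter_cons, if_pos (show 0 < b / 2 by omega)]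
    have hb2 : b / 2 = m := by omega
    rw [hb2, Multiset.singleton_add]
  have hs_hlf : ∀ k, 1 ≤ k → sCount hlf k = sCount q (2*k+1) := by
    intro k hk
    unfold sCount
    calc Multiset.card (Multiset.filter (fun a => k ≤ a)
            (Multiset.filter (fun x => 0 < x) (q.map fun x => x / 2)))
        = Multiset.card (Multiset.filter (fun a => k ≤ a) (q.map fun x => x / 2)) := by
          rw [Multiset.filter_filter]
          congr 1
          refine Multiset.filter_congr fun a _ => ?_
          omega
      _ = Multiset.card (Multiset.filter (fun a => k ≤ a / 2) q) := by
          rw [← Multiset.countP_eq_card_filter, Multiset.countP_map]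
      _ = Multiset.card (Multiset.filter (fun a => 2*k+1 ≤ a) q) := by
          congr 1
          refine Multiset.filter_congr fun a ha => ?_
          have := hqodd a ha
          omega
  have hlf_lt : ∀ x ∈ hlf, x < m := by
    intro x hx
    have hx' := Multiset.mem_of_mem_filter hx
    obtain ⟨a, ha, rfl⟩ := Multiset.mem_map.1 hx'
    have h1 := hqlt a ha
    omega
  have hsup_q'' : maxPart (m ::ₘ hlf) = m := by
    unfold maxPart
    rw [Multiset.sup_cons]
    exact sup_eq_left.2 (Multiset.sup_le.2 fun x hx => le_of_lt (hlf_lt x hx))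
  have hpOne : pOne p = transpose (m ::ₘ hlf) := by
    unfold pOne
    rw [hq''eq]
  have hcard_hlf : Multiset.card hlf ≤ 2*K := by
    rw [← hK]
    calc Multiset.card hlf ≤ Multiset.card (q.map fun x => x/2) :=
          Multiset.card_le_card (Multiset.filter_le _ _)
    _ = Multiset.card q := Multiset.card_map _ _
  have hsq''_le : ∀ i, sCount (m ::ₘ hlf) i ≤ 2*K + 1 := by
    intro i
    have h1 := sCount_le_card (m ::ₘ hlf) i
    rw [Multiset.card_cons] at h1
    omega
  have hp1 : ∀ i, sCount (pOne p) i
      = Multiset.card ((Multiset.range m).filter fun t => i ≤ sCount (m ::ₘ hlf) (t+1)) := by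
    intro i
    rw [hpOne, sCount_transpose, hsup_q'']
  have hp1_le : ∀ i, sCount (pOne p) i ≤ m := by
    intro i
    rw [hp1]
    calc Multiset.card ((Multiset.range m).filter fun t => i ≤ sCount (m ::ₘ hlf) (t+1))
        ≤ Multiset.card (Multiset.range m) := Multiset.card_le_card (Multiset.filter_le _ _)
    _ = m := Multiset.card_range m
  have hp1_parts : ∀ t, t < m → sCount (m ::ₘ hlf) (t+1) = 1 + sCount q (2*t+3) := by
    intro t ht
    rw [sCount_cons, if_pos (by omega : t+1 ≤ m), hs_hlf (t+1) (by omega)]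
    have e : 2*(t+1)+1 = 2*t+3 := by ring
    rw [e]
  have hsP : ∀ i, sCount ((2*K+1) ::ₘ (pOne p + pOne p)) i
      = (if i ≤ 2*K+1 then 1 else 0) + 2 * sCount (pOne p) i := by
    intro i
    rw [sCount_cons, sCount_add]
    split_ifs <;> omega
  have hp1_sup : (pOne p).sup ≤ 2*K+1 := by
    refine Multiset.sup_le.2 fun x hx => ?_
    rw [hpOne] at hx
    unfold transpose at hx
    obtain ⟨i, hi, rfl⟩ := Multiset.mem_map.1 hx
    exact hsq''_le (i+1)
  have hsupP : maxPart ((2*K+1) ::ₘ (pOne p + pOne p)) = 2*K+1 := by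
    unfold maxPart
    rw [Multiset.sup_cons, Multiset.sup_add, sup_idem]
    exact sup_eq_left.2 hp1_sup
  have hpPlus : pPlus p = (b+1) ::ₘ q := rfl
  have hRHS : ∀ j, 1 ≤ j → sCount (pPlus p) j
      = (if j / 2 ≤ m then sCount q (2*(j/2)+1) + 1 else 0) := by
    intro j hj
    rw [hpPlus, sCount_cons]
    by_cases ht : j / 2 ≤ m
    · rw [if_pos ht, if_pos (show j ≤ b + 1 by omega)]
      have hpar : j % 2 = 0 ∨ j % 2 = 1 := by omega
      rcases hpar with he | ho
      · have hk : 1 ≤ j / 2 := by omega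
        have e := hs_oddstep (j/2) hk
        have hj2 : 2 * (j / 2) = j := by omega
        rw [← e, hj2]
        omega
      · have hj2 : 2*(j/2)+1 = j := by omega
        rw [hj2]
        omega
    · rw [if_neg ht, if_neg (show ¬ (j ≤ b+1) by omega), hs0 j (by omega)]
  have hLHS : ∀ j, 1 ≤ j → sCount (transpose ((2*K+1) ::ₘ (pOne p + pOne p))) j
      = (if j / 2 ≤ m then sCount q (2*(j/2)+1) + 1 else 0) := by
    intro j hj
    rw [sCount_transpose, hsupP]
    by_cases ht : j / 2 ≤ m
    · rw [if_pos ht]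
      apply card_filter_range_eq
      · have := hsK (2*(j/2)+1)
        omega
      · intro i hi
        have hiK : i + 1 ≤ 2*K+1 := by
          have := hsK (2*(j/2)+1)
          omega
        rw [hsP, if_pos hiK]
        have hlow : j / 2 ≤ sCount (pOne p) (i+1) := by
          rw [hp1]
          apply le_card_filter_range _ m (j/2) ht
          intro u hu
          rw [hp1_parts u (by omega)]
          have hmono : sCount q (2*(j/2)+1) ≤ sCount q (2*u+3) :=
            sCount_antitone q (by omega)
          omega
        omega
      · intro i hi hiN
        rw [hsP, if_pos (show i+1 ≤ 2*K+1 by omega)]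
        intro hcon
        have hj1 : 1 ≤ j / 2 := by
          by_contra h0
          have hj' : j / 2 = 0 := by omega
          rw [hj'] at hi
          have e01 : 2*0+1 = 1 := by norm_num
          rw [e01] at hi
          have := hs1
          omega
        have hupper : sCount (pOne p) (i+1) ≤ j/2 - 1 := by
          rw [hp1]
          apply card_filter_range_le
          intro u hu hum
          rw [hp1_parts u hum]
          intro hcon2
          have hmono : sCount q (2*u+3) ≤ sCount q (2*(j/2)+1) :=
            sCount_antitone q (by omega)
          omega
        omega
    · rw [if_neg ht]
      apply card_filter_range_eq _ _ _ (Nat.zero_le _)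
      · intro i hi
        exact absurd hi (Nat.not_lt_zero i)
      · intro i hi0 hiN
        rw [hsP, if_pos (by omega)]
        intro hcon
        have := hp1_le (i+1)
        omega
  refine ext_of_sCount ?_ ?_ ?_
  · intro a ha
    unfold transpose at ha
    obtain ⟨i, hi, rfl⟩ := Multiset.mem_map.1 ha
    rw [Multiset.mem_range, hsupP] at hi
    rw [hsP, if_pos (by omega)]
    omega
  · intro a ha
    rw [hpPlus] at ha
    rcases Multiset.mem_cons.1 ha with rfl | ha'
    · omega
    · exact hpos a (hqmem a ha')
  · intro j hj
    rw [hLHS j hj, hRHS j hj]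

/-- `p` a symplectic partition of `2n` whose largest part `b₁` is even and
occurs once (`a₁ = 1`), all other parts being odd.  Then `P = [p₁ p₁ (2n*+1)]` satisfies
`P^t = p^+`; in particular `(P^t)_{SO_{2n+1}} = (p^+)_{SO_{2n+1}}`. -/
theorem transpose_eq_pPlus_mixed (n : ℕ) (p : Multiset ℕ) (hne : p ≠ 0)
    (hp : IsPartitionOf p (2 * n)) (hsymp : IsSymplectic p)
    (hb1 : maxPart p % 2 = 0) (ha1 : p.count (maxPart p) = 1)
    (hodd : ∀ a ∈ p, a ≠ maxPart p → a % 2 = 1) :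
    transpose ((2 * nStar p + 1) ::ₘ (pOne p + pOne p)) = pPlus p ∧
      ∀ c₁ c₂ : Multiset ℕ,
        IsSOCollapse (transpose ((2 * nStar p + 1) ::ₘ (pOne p + pOne p))) c₁ →
        IsSOCollapse (pPlus p) c₂ → c₁ = c₂ := by
  have h1 := part1 p hne hp.1 hsymp hb1 ha1 hodd
  refine ⟨h1, ?_⟩
  intro c₁ c₂ hc₁ hc₂
  rw [h1] at hc₁
  exact collapse_unique _ _ _ hc₁ hc₂

end JiangWF
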